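/- Let q, r : {1,…,m} → [0,1] be two probability distributions (Σ_y q_y = Σ_y r_y = 1) and let π^a, π^b ∈ [0,1] with π^a + π^b = 1 and π^a q_y + π^b r_y > 0 for all y. Then Σ_y q_y · (π^a q_y)/(π^a q_y + π^b r_y) ≥ π^a. -/

import Mathlib

/-- Key submartingale inequality. If `q, r : {1,…,m} → [0,1]` are
probability distributions, `π^a, π^b ∈ [0,1]` with `π^a + π^b = 1` and
`π^a q_y + π^b r_y > 0` for all `y`, then
`∑_y q_y (π^a q_y)/(π^a q_y + π^b r_y) ≥ π^a`. -/
theorem stmt6 {m : ℕ} (q r : Fin m → ℝ)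
    (hq : ∀ y, q y ∈ Set.Icc (0 : ℝ) 1) (hr : ∀ y, r y ∈ Set.Icc (0 : ℝ) 1)
    (hq1 : ∑ y, q y = 1) (hr1 : ∑ y, r y = 1)
    (πa πb : ℝ) (hπa : πa ∈ Set.Icc (0 : ℝ) 1) (hπb : πb ∈ Set.Icc (0 : ℝ) 1)
    (hsum : πa + πb = 1)
    (hpos : ∀ y, 0 < πa * q y + πb * r y) :
    πa ≤ ∑ y, q y * (πa * q y / (πa * q y + πb * r y)) := by
  have key : ∀ y, q y * r y / (πa * q y + πb * r y) ≤ πb * q y + πa * r y := by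
    intro y
    rw [div_le_iff₀ (hpos y)]
    have hb : πb = 1 - πa := by linarith
    subst hb
    nlinarith [mul_nonneg (mul_nonneg hπa.1 (by linarith [hπa.2] : (0:ℝ) ≤ 1 - πa)) (sq_nonneg (q y - r y))]
  have hsum2 : ∑ y, q y * r y / (πa * q y + πb * r y) ≤ 1 := by
    calc ∑ y, q y * r y / (πa * q y + πb * r y)
        ≤ ∑ y, (πb * q y + πa * r y) := Finset.sum_le_sum fun y _ => key y
      _ = 1 := by
        rw [Finset.sum_add_distrib, ← Finset.mul_sum, ← Finset.mul_sum, hq1, hr1]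
        linarith
  have hterm : ∀ y, q y * (πa * q y / (πa * q y + πb * r y))
      = q y - πb * (q y * r y / (πa * q y + πb * r y)) := by
    intro y
    have hd := (hpos y).ne'
    rw [mul_div_assoc', mul_div_assoc', eq_sub_iff_add_eq, ← add_div, div_eq_iff hd]
    ring
  calc πa = 1 - πb := by linarith
    _ ≤ 1 - πb * ∑ y, q y * r y / (πa * q y + πb * r y) := by
        nlinarith [mul_le_mul_of_nonneg_left hsum2 hπb.1]
    _ = ∑ y, (q y - πb * (q y * r y / (πa * q y + πb * r y))) := by
        rw [Finset.sum_sub_distrib, hq1, Finset.mul_sum]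
    _ = ∑ y, q y * (πa * q y / (πa * q y + πb * r y)) :=
        Finset.sum_congr rfl fun y _ => (hterm y).symm
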